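/- arXiv:2010.06383 — 3 statements merged into one kernel-verified Lean document; each statement's English description precedes it below -/
import Mathlib

section
/- Let ρ be a non-degenerate density matrix. The potential Φ_ρ, defined by Φ_ρ(A) = log Tr exp(log ρ + A), is a convex function on the real vector space of Hermitian n×n matrices: for all Hermitian A, B and all t ∈ [0,1], Φ_ρ((1−t)A + tB) ≤ (1−t)Φ_ρ(A) + tΦ_ρ(B). -/
open MeasureTheory
open scoped ComplexOrder

attribute [local instance] Matrix.frobeniusNormedAddCommGroup Matrix.frobeniusNormedSpace

variable {n : ℕ}

/-- The matrix exponential. -/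
noncomputable def mexp (A : Matrix (Fin n) (Fin n) ℂ) : Matrix (Fin n) (Fin n) ℂ :=
  NormedSpace.exp A

/-- The matrix logarithm, defined by (real) functional calculus; meaningful on
positive definite matrices. -/
noncomputable def mlog (A : Matrix (Fin n) (Fin n) ℂ) : Matrix (Fin n) (Fin n) ℂ :=
  cfc Real.log A

/-- Real powers of a matrix, defined by (real) functional calculus; meaningful on
positive definite matrices. -/
noncomputable def mpow (A : Matrix (Fin n) (Fin n) ℂ) (u : ℝ) : Matrix (Fin n) (Fin n) ℂ :=
  cfc (fun x : ℝ => x ^ u) A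

/-- Umegaki's relative entropy `D(ρ‖σ) = Tr ρ (log ρ - log σ)` (a real number). -/
noncomputable def relEnt (ρ σ : Matrix (Fin n) (Fin n) ℂ) : ℝ :=
  (Matrix.trace (ρ * (mlog ρ - mlog σ))).re

/-- The Kubo transform `[A]^K_ρ = ∫₀¹ ρ^u A ρ^(1-u) du` (entrywise Bochner integral). -/
noncomputable def kubo (ρ A : Matrix (Fin n) (Fin n) ℂ) : Matrix (Fin n) (Fin n) ℂ :=
  ∫ u in (0:ℝ)..1, mpow ρ u * A * mpow ρ (1 - u)

/-- The chart centered at `ρ`: `c_ρ(σ) = log σ - log ρ + D(ρ‖σ)·I`. -/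
noncomputable def chart (ρ σ : Matrix (Fin n) (Fin n) ℂ) : Matrix (Fin n) (Fin n) ℂ :=
  mlog σ - mlog ρ + relEnt ρ σ • (1 : Matrix (Fin n) (Fin n) ℂ)

/-- The normalization `α(t) = log Tr exp((1-t)·log ρ + t·log σ)` of the exponential arc. -/
noncomputable def alpha (ρ σ : Matrix (Fin n) (Fin n) ℂ) (t : ℝ) : ℝ :=
  Real.log (Matrix.trace (mexp ((1 - t) • mlog ρ + t • mlog σ))).re

/-- The exponential arc connecting `σ` to `ρ`:
`σ_t = exp((1-t)·log ρ + t·log σ - α(t)·I)`. -/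
noncomputable def arc (ρ σ : Matrix (Fin n) (Fin n) ℂ) (t : ℝ) : Matrix (Fin n) (Fin n) ℂ :=
  mexp ((1 - t) • mlog ρ + t • mlog σ - alpha ρ σ t • (1 : Matrix (Fin n) (Fin n) ℂ))

/-- The potential `Φ_ρ(A) = log Tr exp(log ρ + A)`. -/
noncomputable def potential (ρ A : Matrix (Fin n) (Fin n) ℂ) : ℝ :=
  Real.log (Matrix.trace (mexp (mlog ρ + A))).re

/-- The density matrix `τ_A = exp(log ρ + A) / Tr exp(log ρ + A)`. -/
noncomputable def tauOf (ρ A : Matrix (Fin n) (Fin n) ℂ) : Matrix (Fin n) (Fin n) ℂ :=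
  (Matrix.trace (mexp (mlog ρ + A)))⁻¹ • mexp (mlog ρ + A)

-- conjugation by unitary entry computation
lemma conj_diag_re (W : Matrix (Fin n) (Fin n) ℂ) (c : Fin n → ℝ) (i : Fin n) :
    ((star W * Matrix.diagonal (fun j => (c j : ℂ)) * W) i i).re
      = ∑ j, c j * Complex.normSq (W j i) := by
  have h : ∀ k : Fin n, (star W) i k * (c k : ℂ) * W k i
      = ((c k * Complex.normSq (W k i) : ℝ) : ℂ) := by
    intro k
    rw [Matrix.star_apply, show star (W k i) = (starRingEnd ℂ) (W k i) from rfl]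
    push_cast
    rw [← Complex.mul_conj]
    ring
  rw [Matrix.mul_apply]
  have h2 : ∀ k : Fin n, (star W * Matrix.diagonal (fun j => (c j : ℂ))) i k
      = (star W) i k * (c k : ℂ) := by
    intro k
    rw [Matrix.mul_apply]
    simp [Matrix.diagonal_apply, Finset.sum_ite_eq]
  simp_rw [h2, h, ← Complex.ofReal_sum, Complex.ofReal_re]

lemma mexp_spectral {M : Matrix (Fin n) (Fin n) ℂ} (hM : M.IsHermitian) :
    mexp M = (hM.eigenvectorUnitary : Matrix (Fin n) (Fin n) ℂ)
      * Matrix.diagonal (fun j => (Real.exp (hM.eigenvalues j) : ℂ))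
      * star (hM.eigenvectorUnitary : Matrix (Fin n) (Fin n) ℂ) := by
  set U := (hM.eigenvectorUnitary : Matrix (Fin n) (Fin n) ℂ)
  have hU1 : U * star U = 1 := Matrix.mem_unitaryGroup_iff.mp hM.eigenvectorUnitary.2
  have hUinv : U⁻¹ = star U := Matrix.inv_eq_right_inv hU1
  have hU2 : star U * U = 1 := Matrix.mem_unitaryGroup_iff'.mp hM.eigenvectorUnitary.2
  have hUu : IsUnit U := ⟨⟨U, star U, hU1, hU2⟩, rfl⟩
  calc mexp M = NormedSpace.exp (U * Matrix.diagonal (RCLike.ofReal ∘ hM.eigenvalues) * U⁻¹) := by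
        rw [mexp, hUinv]; exact congrArg _ hM.spectral_theorem
    _ = U * NormedSpace.exp (Matrix.diagonal (RCLike.ofReal ∘ hM.eigenvalues)) * U⁻¹ :=
        Matrix.exp_conj U _ hUu
    _ = _ := by
        have hfun : (fun i => NormedSpace.exp ((RCLike.ofReal ∘ hM.eigenvalues : Fin n → ℂ) i))
            = fun j => ((Real.exp (hM.eigenvalues j) : ℝ) : ℂ) := by
          funext j
          rw [Function.comp_apply, ← Complex.exp_eq_exp_ℂ]
          exact (Complex.ofReal_exp _).symm
        rw [hUinv, Matrix.exp_diagonal, Pi.exp_def, hfun]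

lemma trace_mexp_re {M : Matrix (Fin n) (Fin n) ℂ} (hM : M.IsHermitian) :
    (Matrix.trace (mexp M)).re = ∑ j, Real.exp (hM.eigenvalues j) := by
  set U := (hM.eigenvectorUnitary : Matrix (Fin n) (Fin n) ℂ)
  have hU2 : star U * U = 1 := Matrix.mem_unitaryGroup_iff'.mp hM.eigenvectorUnitary.2
  rw [mexp_spectral hM, Matrix.trace_mul_cycle, hU2, one_mul, Matrix.trace_diagonal]
  rw [← Complex.ofReal_sum, Complex.ofReal_re]

lemma colsum_normSq {W : Matrix (Fin n) (Fin n) ℂ} (hW : star W * W = 1) (i : Fin n) :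
    ∑ j, Complex.normSq (W j i) = 1 := by
  have h := conj_diag_re W (fun _ => (1 : ℝ)) i
  simp only [Complex.ofReal_one, Matrix.diagonal_one, mul_one, one_mul] at h
  rw [hW] at h
  simpa [Matrix.one_apply] using h.symm

lemma peierls {M V : Matrix (Fin n) (Fin n) ℂ} (hM : M.IsHermitian)
    (hV : V ∈ Matrix.unitaryGroup (Fin n) ℂ) :
    ∑ i, Real.exp (((star V * M * V) i i).re) ≤ (Matrix.trace (mexp M)).re := by
  set U := (hM.eigenvectorUnitary : Matrix (Fin n) (Fin n) ℂ) with hUdef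
  have hU1 : U * star U = 1 := Matrix.mem_unitaryGroup_iff.mp hM.eigenvectorUnitary.2
  have hU2 : star U * U = 1 := Matrix.mem_unitaryGroup_iff'.mp hM.eigenvectorUnitary.2
  have hV1 : V * star V = 1 := Matrix.mem_unitaryGroup_iff.mp hV
  have hV2 : star V * V = 1 := Matrix.mem_unitaryGroup_iff'.mp hV
  set W := star U * V with hWdef
  have hsW : star W = star V * U := by rw [hWdef, star_mul, star_star]
  have hW1 : star W * W = 1 := by
    rw [hsW, hWdef, mul_assoc, ← mul_assoc U, hU1, one_mul, hV2]
  have hW2 : W * star W = 1 := by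
    rw [hsW, hWdef, mul_assoc, ← mul_assoc V, hV1, one_mul, hU2]
  have hrow : ∀ j, ∑ i, Complex.normSq (W j i) = 1 := by
    intro j
    have hsW1 : star (star W) * star W = 1 := by rw [star_star, hW2]
    have := colsum_normSq hsW1 j
    simpa [Matrix.star_apply, Complex.normSq_conj] using this
  have hconj : star V * M * V = star W * Matrix.diagonal
      (fun j => ((hM.eigenvalues j : ℝ) : ℂ)) * W := by
    have hspec : M = U * Matrix.diagonal (fun j => ((hM.eigenvalues j : ℝ) : ℂ)) * star U := by
      convert hM.spectral_theorem using 3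
      rfl
    conv_lhs => rw [hspec]
    simp only [hsW, hWdef]
    simp only [star_mul, star_star, Matrix.mul_assoc]
  have hdiag : ∀ i, ((star V * M * V) i i).re
      = ∑ j, hM.eigenvalues j * Complex.normSq (W j i) := by
    intro i
    rw [hconj]
    exact conj_diag_re W hM.eigenvalues i
  calc ∑ i, Real.exp (((star V * M * V) i i).re)
      ≤ ∑ i, ∑ j, Complex.normSq (W j i) * Real.exp (hM.eigenvalues j) := by
        apply Finset.sum_le_sum
        intro i _
        rw [hdiag i]
        have := convexOn_exp.map_sum_le (t := Finset.univ)
          (w := fun j => Complex.normSq (W j i)) (p := fun j => hM.eigenvalues j)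
          (fun j _ => Complex.normSq_nonneg _) (colsum_normSq hW1 i)
          (fun j _ => Set.mem_univ _)
        simp only [smul_eq_mul] at this
        calc Real.exp (∑ j, hM.eigenvalues j * Complex.normSq (W j i))
            = Real.exp (∑ j, Complex.normSq (W j i) * hM.eigenvalues j) := by
              congr 1; exact Finset.sum_congr rfl fun j _ => mul_comm _ _
          _ ≤ ∑ j, Complex.normSq (W j i) * Real.exp (hM.eigenvalues j) := this
    _ = ∑ j, Real.exp (hM.eigenvalues j) := by
        rw [Finset.sum_comm]
        refine Finset.sum_congr rfl fun j _ => ?_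
        rw [← Finset.sum_mul, hrow j, one_mul]
    _ = (Matrix.trace (mexp M)).re := (trace_mexp_re hM).symm

lemma holder2 (hn : 1 ≤ n) (a b : Fin n → ℝ) {t : ℝ} (ht0 : 0 ≤ t) (ht1 : t ≤ 1) :
    ∑ i, Real.exp ((1 - t) * a i + t * b i)
      ≤ (∑ i, Real.exp (a i)) ^ (1 - t) * (∑ i, Real.exp (b i)) ^ t := by
  have hne : (Finset.univ : Finset (Fin n)).Nonempty := by
    have : Nonempty (Fin n) := Fin.pos_iff_nonempty.mp hn
    exact Finset.univ_nonempty
  set S1 := ∑ i, Real.exp (a i) with hS1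
  set S2 := ∑ i, Real.exp (b i) with hS2
  have hS1pos : 0 < S1 := Finset.sum_pos (fun i _ => Real.exp_pos _) hne
  have hS2pos : 0 < S2 := Finset.sum_pos (fun i _ => Real.exp_pos _) hne
  have ht0' : 0 ≤ 1 - t := by linarith
  have key : ∀ i, Real.exp ((1 - t) * a i + t * b i)
      ≤ S1 ^ (1 - t) * S2 ^ t * ((1 - t) * (Real.exp (a i) / S1) + t * (Real.exp (b i) / S2)) := by
    intro i
    have h1 : Real.exp ((1 - t) * a i + t * b i)
        = (Real.exp (a i) / S1) ^ (1 - t) * (Real.exp (b i) / S2) ^ t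
          * (S1 ^ (1 - t) * S2 ^ t) := by
      rw [Real.div_rpow (Real.exp_pos _).le hS1pos.le,
        Real.div_rpow (Real.exp_pos _).le hS2pos.le,
        ← Real.exp_mul, ← Real.exp_mul, Real.exp_add]
      field_simp
    rw [h1]
    have h2 : (Real.exp (a i) / S1) ^ (1 - t) * (Real.exp (b i) / S2) ^ t
        ≤ (1 - t) * (Real.exp (a i) / S1) + t * (Real.exp (b i) / S2) :=
      Real.geom_mean_le_arith_mean2_weighted ht0' ht0 (by positivity) (by positivity)
        (by ring)
    calc (Real.exp (a i) / S1) ^ (1 - t) * (Real.exp (b i) / S2) ^ t * (S1 ^ (1 - t) * S2 ^ t)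
        ≤ ((1 - t) * (Real.exp (a i) / S1) + t * (Real.exp (b i) / S2))
          * (S1 ^ (1 - t) * S2 ^ t) := by
          apply mul_le_mul_of_nonneg_right h2 (by positivity)
      _ = _ := by ring
  calc ∑ i, Real.exp ((1 - t) * a i + t * b i)
      ≤ ∑ i, S1 ^ (1 - t) * S2 ^ t
          * ((1 - t) * (Real.exp (a i) / S1) + t * (Real.exp (b i) / S2)) :=
        Finset.sum_le_sum fun i _ => key i
    _ = S1 ^ (1 - t) * S2 ^ t := by
        rw [← Finset.mul_sum]
        have : ∑ i, ((1 - t) * (Real.exp (a i) / S1) + t * (Real.exp (b i) / S2)) = 1 := by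
          rw [Finset.sum_add_distrib]
          simp_rw [div_eq_mul_inv, ← Finset.mul_sum, ← Finset.sum_mul]
          rw [← hS1, ← hS2, mul_inv_cancel₀ hS1pos.ne', mul_inv_cancel₀ hS2pos.ne']
          ring
        rw [this, mul_one]

/-- the potential `Φ_ρ` is convex on the real vector space of Hermitian
matrices. -/
theorem stmt16 (n : ℕ) (hn : 1 ≤ n) (ρ : Matrix (Fin n) (Fin n) ℂ)
    (hρ : ρ.PosDef) (hρ1 : ρ.trace = 1)
    (A B : Matrix (Fin n) (Fin n) ℂ) (hA : A.IsHermitian) (hB : B.IsHermitian)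
    (t : ℝ) (ht0 : 0 ≤ t) (ht1 : t ≤ 1) :
    potential ρ ((1 - t) • A + t • B)
      ≤ (1 - t) * potential ρ A + t * potential ρ B := by
  have hne : (Finset.univ : Finset (Fin n)).Nonempty := by
    have : Nonempty (Fin n) := Fin.pos_iff_nonempty.mp hn
    exact Finset.univ_nonempty
  have hL : (mlog ρ).IsHermitian := by
    have h : IsSelfAdjoint (cfc Real.log ρ) := cfc_predicate _ _
    exact h
  set L := mlog ρ with hLdef
  set M := L + A with hMdef
  set N := L + B with hNdef
  have hMh : M.IsHermitian := hL.add hA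
  have hNh : N.IsHermitian := hL.add hB
  have hCeq : L + ((1 - t) • A + t • B) = (1 - t) • M + t • N := by
    rw [hMdef, hNdef]; module
  have hCh : ((1 - t) • M + t • N).IsHermitian := by
    have h1 : IsSelfAdjoint ((1 - t) • M) := IsSelfAdjoint.smul (star_trivial (1 - t)) hMh.isSelfAdjoint
    have h2 : IsSelfAdjoint (t • N) := IsSelfAdjoint.smul (star_trivial t) hNh.isSelfAdjoint
    exact h1.add h2
  set V := (hCh.eigenvectorUnitary : Matrix (Fin n) (Fin n) ℂ) with hVdef
  set a : Fin n → ℝ := fun i => ((star V * M * V) i i).re with hadef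
  set b : Fin n → ℝ := fun i => ((star V * N * V) i i).re with hbdef
  have hlam : ∀ i, hCh.eigenvalues i = (1 - t) * a i + t * b i := by
    intro i
    have h1 : star V * ((1 - t) • M + t • N) * V
        = (1 - t) • (star V * M * V) + t • (star V * N * V) := by
      rw [Matrix.mul_add, Matrix.add_mul, Matrix.mul_smul, Matrix.mul_smul,
        Matrix.smul_mul, Matrix.smul_mul]
    have h0 := hCh.conjStarAlgAut_star_eigenvectorUnitary
    rw [Unitary.conjStarAlgAut_star_apply] at h0
    have h2 := congrArg (fun X : Matrix (Fin n) (Fin n) ℂ => (X i i).re)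
      (h0.symm.trans h1)
    simpa [Matrix.diagonal_apply_eq, Matrix.add_apply, Matrix.smul_apply,
      Complex.real_smul, Complex.add_re, Complex.re_ofReal_mul] using h2
  set S1 := ∑ i, Real.exp (a i) with hS1
  set S2 := ∑ i, Real.exp (b i) with hS2
  have hS1pos : 0 < S1 := Finset.sum_pos (fun i _ => Real.exp_pos _) hne
  have hS2pos : 0 < S2 := Finset.sum_pos (fun i _ => Real.exp_pos _) hne
  have hT1 : S1 ≤ (Matrix.trace (mexp M)).re := peierls hMh hCh.eigenvectorUnitary.2
  have hT2 : S2 ≤ (Matrix.trace (mexp N)).re := peierls hNh hCh.eigenvectorUnitary.2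
  have hT1pos : 0 < (Matrix.trace (mexp M)).re := lt_of_lt_of_le hS1pos hT1
  have hT2pos : 0 < (Matrix.trace (mexp N)).re := lt_of_lt_of_le hS2pos hT2
  have ht0' : 0 ≤ 1 - t := by linarith
  have hmain : (Matrix.trace (mexp ((1 - t) • M + t • N))).re
      ≤ (Matrix.trace (mexp M)).re ^ (1 - t) * (Matrix.trace (mexp N)).re ^ t := by
    rw [trace_mexp_re hCh]
    calc ∑ j, Real.exp (hCh.eigenvalues j)
        = ∑ j, Real.exp ((1 - t) * a j + t * b j) := by
          exact Finset.sum_congr rfl fun j _ => by rw [hlam j]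
      _ ≤ S1 ^ (1 - t) * S2 ^ t := holder2 hn a b ht0 ht1
      _ ≤ (Matrix.trace (mexp M)).re ^ (1 - t) * (Matrix.trace (mexp N)).re ^ t := by
          exact mul_le_mul (Real.rpow_le_rpow hS1pos.le hT1 ht0')
            (Real.rpow_le_rpow hS2pos.le hT2 ht0)
            (Real.rpow_nonneg hS2pos.le t) (Real.rpow_nonneg hT1pos.le (1 - t))
  have hCpos : 0 < (Matrix.trace (mexp ((1 - t) • M + t • N))).re := by
    rw [trace_mexp_re hCh]
    exact Finset.sum_pos (fun i _ => Real.exp_pos _) hne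
  have hlog := Real.log_le_log hCpos hmain
  rw [Real.log_mul (Real.rpow_pos_of_pos hT1pos (1 - t)).ne'
    (Real.rpow_pos_of_pos hT2pos t).ne', Real.log_rpow hT1pos,
    Real.log_rpow hT2pos] at hlog
  calc potential ρ ((1 - t) • A + t • B)
      = Real.log (Matrix.trace (mexp ((1 - t) • M + t • N))).re := by
        rw [potential, ← hLdef, hCeq]
    _ ≤ (1 - t) * Real.log (Matrix.trace (mexp M)).re
        + t * Real.log (Matrix.trace (mexp N)).re := hlog
    _ = (1 - t) * potential ρ A + t * potential ρ B := by rw [potential, potential, ← hLdef]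
end

section
/- Let ρ be a non-degenerate density matrix and A, B Hermitian n×n matrices, and define Φ_ρ(A) = log Tr exp(log ρ + A) and τ_A = exp(log ρ + A) / Tr exp(log ρ + A). Then the real-valued function t ↦ Φ_ρ(A + tB) is differentiable at t = 0 with derivative Tr( τ_A B ); i.e. the derivative of the potential Φ_ρ at A in the direction B equals Tr τ_A B. -/
open MeasureTheory
open scoped ComplexOrder

attribute [local instance] Matrix.frobeniusNormedAddCommGroup Matrix.frobeniusNormedSpace

variable {n : ℕ}

attribute [local instance] Matrix.frobeniusNormedRing Matrix.frobeniusNormedAlgebra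

section stmt17aux

open NormedSpace (exp)

private lemma aux_norm_pow_mul_le (M C : Matrix (Fin n) (Fin n) ℂ) (j : ℕ) :
    ‖M ^ j * C‖ ≤ ‖M‖ ^ j * ‖C‖ := by
  induction j with
  | zero => simp
  | succ k ih =>
    calc ‖M ^ (k + 1) * C‖ = ‖M * (M ^ k * C)‖ := by rw [pow_succ', mul_assoc]
    _ ≤ ‖M‖ * ‖M ^ k * C‖ := norm_mul_le _ _
    _ ≤ ‖M‖ * (‖M‖ ^ k * ‖C‖) := mul_le_mul_of_nonneg_left ih (norm_nonneg M)
    _ = ‖M‖ ^ (k + 1) * ‖C‖ := by ring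

private lemma aux_hasDerivAt_pow_line (H B : Matrix (Fin n) (Fin n) ℂ) (k : ℕ) (t : ℝ) :
    HasDerivAt (fun s : ℝ => (H + s • B) ^ k)
      (∑ j ∈ Finset.range k, (H + t • B) ^ j * B * (H + t • B) ^ (k - 1 - j)) t := by
  have hM : HasDerivAt (fun s : ℝ => H + s • B) B t := by
    exact (((hasDerivAt_id' t).smul_const B).const_add H).congr_deriv (one_smul _ _)
  induction k with
  | zero =>
    simp only [pow_zero, Finset.range_zero, Finset.sum_empty]
    exact hasDerivAt_const t (1 : Matrix (Fin n) (Fin n) ℂ)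
  | succ k ih =>
    have h1 := ih.mul hM
    have hfun : (fun s : ℝ => (H + s • B) ^ (k + 1))
        = fun s : ℝ => (H + s • B) ^ k * (H + s • B) := funext fun s => pow_succ _ _
    rw [hfun]
    refine h1.congr_deriv ?_
    symm
    rw [Finset.sum_range_succ, Finset.sum_mul]
    have h0 : k + 1 - 1 - k = 0 := by omega
    rw [h0, pow_zero, mul_one]
    have hsum : ∀ j ∈ Finset.range k,
        (H + t • B) ^ j * B * (H + t • B) ^ (k + 1 - 1 - j)
          = (H + t • B) ^ j * B * (H + t • B) ^ (k - 1 - j) * (H + t • B) := by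
      intro j hj
      rw [Finset.mem_range] at hj
      have e : k + 1 - 1 - j = k - 1 - j + 1 := by omega
      rw [e, pow_succ]
      simp only [mul_assoc]
    rw [Finset.sum_congr rfl hsum, add_comm]

private lemma aux_trace_sum_deriv (M B : Matrix (Fin n) (Fin n) ℂ) (k : ℕ) :
    (∑ j ∈ Finset.range k, M ^ j * B * M ^ (k - 1 - j)).trace
      = (k : ℂ) * (M ^ (k - 1) * B).trace := by
  rw [Matrix.trace_sum]
  have h : ∀ j ∈ Finset.range k,
      (M ^ j * B * M ^ (k - 1 - j)).trace = (M ^ (k - 1) * B).trace := by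
    intro j hj
    rw [Finset.mem_range] at hj
    rw [Matrix.trace_mul_comm, ← mul_assoc, ← pow_add]
    have : k - 1 - j + j = k - 1 := by omega
    rw [this]
  rw [Finset.sum_congr rfl h, Finset.sum_const, Finset.card_range, nsmul_eq_mul]


private lemma aux_norm_mul_pow_le (M C : Matrix (Fin n) (Fin n) ℂ) (j : ℕ) :
    ‖C * M ^ j‖ ≤ ‖C‖ * ‖M‖ ^ j := by
  induction j with
  | zero => simp
  | succ k ih =>
    calc ‖C * M ^ (k + 1)‖ = ‖C * M ^ k * M‖ := by rw [pow_succ, mul_assoc]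
    _ ≤ ‖C * M ^ k‖ * ‖M‖ := norm_mul_le _ _
    _ ≤ ‖C‖ * ‖M‖ ^ k * ‖M‖ := mul_le_mul_of_nonneg_right ih (norm_nonneg M)
    _ = ‖C‖ * ‖M‖ ^ (k + 1) := by ring

private lemma aux_hasDerivAt_trace_exp (H B : Matrix (Fin n) (Fin n) ℂ) :
    HasDerivAt (fun t : ℝ => (mexp (H + t • B)).trace)
      ((mexp H * B).trace) 0 := by
  classical
  simp only [mexp]
  set R : ℝ := ‖H‖ + ‖B‖ with hR
  set g : ℕ → ℝ → Matrix (Fin n) (Fin n) ℂ :=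
    fun k t => ((k.factorial : ℂ))⁻¹ • (H + t • B) ^ k with hg
  set g' : ℕ → ℝ → Matrix (Fin n) (Fin n) ℂ := fun k t =>
    ((k.factorial : ℂ))⁻¹ •
      ∑ j ∈ Finset.range k, (H + t • B) ^ j * B * (H + t • B) ^ (k - 1 - j) with hg'
  set u : ℕ → ℝ := fun k => ((k.factorial : ℝ))⁻¹ * (k * (‖B‖ * R ^ (k - 1))) with hu
  have hu_sum : Summable u := by
    rw [← summable_nat_add_iff 1]
    have he : (fun k => u (k + 1)) = fun k => ‖B‖ * (R ^ k / (k.factorial : ℝ)) := by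
      funext k
      have h1 : (((k + 1).factorial : ℝ)) = ((k : ℝ) + 1) * (k.factorial : ℝ) := by
        rw [Nat.factorial_succ]; push_cast; ring
      have h2 : (k.factorial : ℝ) ≠ 0 := Nat.cast_ne_zero.mpr k.factorial_ne_zero
      have h3 : ((k : ℝ) + 1) ≠ 0 := by positivity
      simp only [hu, h1, Nat.cast_add, Nat.cast_one]
      rw [mul_inv]
      field_simp
      ring_nf
      rw [Nat.add_sub_cancel_left]
    rw [he]
    exact (Real.summable_pow_div_factorial R).mul_left _
  have hderiv : ∀ k t, t ∈ Metric.ball (0:ℝ) 1 → HasDerivAt (g k) (g' k t) t :=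
    fun k t _ => (aux_hasDerivAt_pow_line H B k t).const_smul ((k.factorial : ℂ))⁻¹
  have hbound : ∀ k t, t ∈ Metric.ball (0:ℝ) 1 → ‖g' k t‖ ≤ u k := by
    intro k t ht
    have hMt : ‖H + t • B‖ ≤ R := by
      refine (norm_add_le _ _).trans ?_
      rw [hR, norm_smul, Real.norm_eq_abs]
      have habs : |t| ≤ 1 := le_of_lt (by simpa [Real.dist_eq] using Metric.mem_ball.mp ht)
      nlinarith [norm_nonneg B, abs_nonneg t]
    have hterm : ∀ j ∈ Finset.range k,
        ‖(H + t • B) ^ j * B * (H + t • B) ^ (k - 1 - j)‖ ≤ ‖B‖ * R ^ (k - 1) := by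
      intro j hj
      rw [Finset.mem_range] at hj
      have h1 : ‖(H + t • B) ^ j * B * (H + t • B) ^ (k - 1 - j)‖
          ≤ ‖H + t • B‖ ^ j * (‖B‖ * ‖H + t • B‖ ^ (k - 1 - j)) := by
        rw [mul_assoc]
        refine (aux_norm_pow_mul_le _ _ j).trans ?_
        exact mul_le_mul_of_nonneg_left (aux_norm_mul_pow_le _ _ _)
          (pow_nonneg (norm_nonneg _) j)
      refine h1.trans ?_
      have h2 : ‖H + t • B‖ ^ j * (‖B‖ * ‖H + t • B‖ ^ (k - 1 - j))
          ≤ R ^ j * (‖B‖ * R ^ (k - 1 - j)) := by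
        gcongr
      refine h2.trans_eq ?_
      have h3 : j + (k - 1 - j) = k - 1 := by omega
      conv_rhs => rw [← h3]
      rw [pow_add]
      ring
    have hs : ‖∑ j ∈ Finset.range k,
        (H + t • B) ^ j * B * (H + t • B) ^ (k - 1 - j)‖ ≤ (k : ℝ) * (‖B‖ * R ^ (k - 1)) := by
      refine (norm_sum_le _ _).trans ?_
      have := Finset.sum_le_card_nsmul (Finset.range k) _ _ hterm
      simpa [Finset.card_range, nsmul_eq_mul] using this
    have hnorm : ‖((k.factorial : ℂ))⁻¹‖ = ((k.factorial : ℝ))⁻¹ := by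
      rw [norm_inv]
      simp
    calc ‖g' k t‖ = ((k.factorial : ℝ))⁻¹ * ‖∑ j ∈ Finset.range k,
          (H + t • B) ^ j * B * (H + t • B) ^ (k - 1 - j)‖ := by
          rw [hg']; rw [norm_smul, hnorm]
    _ ≤ ((k.factorial : ℝ))⁻¹ * ((k : ℝ) * (‖B‖ * R ^ (k - 1))) :=
          mul_le_mul_of_nonneg_left hs (by positivity)
    _ = u k := rfl
  have hsum0' : Summable fun k : ℕ => ((k.factorial : ℂ))⁻¹ • H ^ k :=
    NormedSpace.expSeries_summable' (𝕂 := ℂ) H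
  have hsum0 : Summable fun k => g k 0 := by
    simpa [hg] using hsum0'
  have hmain := hasDerivAt_tsum_of_isPreconnected hu_sum Metric.isOpen_ball
      (convex_ball (0:ℝ) 1).isPreconnected hderiv hbound
      (Metric.mem_ball_self one_pos) hsum0 (Metric.mem_ball_self one_pos)
  have hfun : (fun t : ℝ => ∑' k, g k t) = fun t : ℝ => NormedSpace.exp (H + t • B) := by
    funext t
    rw [NormedSpace.exp_eq_tsum ℂ]
  replace hmain := hmain.congr_of_eventuallyEq
    (Filter.Eventually.of_forall fun t => (congrFun hfun t).symm)
  have hsum' : Summable fun k => g' k 0 :=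
    Summable.of_norm_bounded hu_sum fun k => hbound k 0 (Metric.mem_ball_self one_pos)
  let L : Matrix (Fin n) (Fin n) ℂ →L[ℝ] ℂ :=
    LinearMap.toContinuousLinearMap (Matrix.traceLinearMap (Fin n) ℝ ℂ)
  have hL : ∀ M : Matrix (Fin n) (Fin n) ℂ, L M = M.trace := fun _ => rfl
  have htr := L.hasFDerivAt.comp_hasDerivAt 0 hmain
  have hkey : L (∑' k, g' k 0) = (NormedSpace.exp H * B).trace := by
    rw [L.map_tsum hsum']
    have hterm0 : ∀ k, L (g' k 0)
        = ((k.factorial : ℂ))⁻¹ * ((k : ℂ) * (H ^ (k - 1) * B).trace) := by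
      intro k
      rw [hL]
      simp only [hg', zero_smul, add_zero]
      rw [Matrix.trace_smul, aux_trace_sum_deriv]
      rw [smul_eq_mul]
    rw [tsum_congr hterm0]
    have hrhs : (NormedSpace.exp H * B).trace
        = ∑' k : ℕ, ((k.factorial : ℂ))⁻¹ * (H ^ k * B).trace := by
      let L2 : Matrix (Fin n) (Fin n) ℂ →L[ℝ] ℂ :=
        LinearMap.toContinuousLinearMap
          ((Matrix.traceLinearMap (Fin n) ℝ ℂ).comp (LinearMap.mulRight ℝ B))
      have hL2 : ∀ M : Matrix (Fin n) (Fin n) ℂ, L2 M = (M * B).trace := fun _ => rfl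
      rw [← hL2, NormedSpace.exp_eq_tsum ℂ, L2.map_tsum hsum0']
      refine tsum_congr fun k => ?_
      rw [hL2, smul_mul_assoc, Matrix.trace_smul, smul_eq_mul]
    rw [hrhs]
    have hcs : Summable fun k : ℕ =>
        ((k.factorial : ℂ))⁻¹ * ((k : ℂ) * (H ^ (k - 1) * B).trace) := by
      refine Summable.congr (hsum'.map L.toLinearMap.toAddMonoidHom L.continuous)
        fun k => ?_
      exact hterm0 k
    rw [hcs.tsum_eq_zero_add]
    simp only [Nat.cast_zero, zero_mul, mul_zero, zero_add]
    refine tsum_congr fun k => ?_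
    have h1 : (((k + 1).factorial : ℂ)) = ((k : ℂ) + 1) * (k.factorial : ℂ) := by
      rw [Nat.factorial_succ]; push_cast; ring
    have h2 : (k.factorial : ℂ) ≠ 0 := Nat.cast_ne_zero.mpr k.factorial_ne_zero
    have h3 : ((k : ℂ) + 1) ≠ 0 := by
      have := Nat.cast_ne_zero (R := ℂ) (n := k + 1) |>.mpr (Nat.succ_ne_zero k)
      push_cast at this
      exact this
    rw [Nat.succ_sub_one, h1, mul_inv]
    push_cast
    field_simp
  replace htr := htr.congr_deriv hkey
  exact htr


private lemma aux_trace_exp_real_pos (hn : 1 ≤ n) {H : Matrix (Fin n) (Fin n) ℂ}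
    (hH : H.IsHermitian) :
    (mexp H).trace = (((mexp H).trace.re : ℝ) : ℂ) ∧ 0 < (mexp H).trace.re := by
  classical
  simp only [mexp]
  set N := NormedSpace.exp ((2⁻¹ : ℂ) • H) with hN
  have hstarH : star H = H := hH
  have hNstar : star N = N := by
    rw [hN, NormedSpace.star_exp, star_smul, hstarH]
    congr 1
    simp
  have hhalf : (2⁻¹ : ℂ) • H + (2⁻¹ : ℂ) • H = H := by
    rw [← add_smul]
    norm_num
  have hsplit : NormedSpace.exp H = star N * N := by
    rw [hNstar, hN]
    conv_lhs => rw [← hhalf]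
    exact NormedSpace.exp_add_of_commute (Commute.refl _)
  have hNunit : IsUnit N := NormedSpace.isUnit_exp _
  have hN0 : N ≠ 0 := by
    intro h
    rw [h, isUnit_zero_iff] at hNunit
    have h2 := congrFun (congrFun hNunit ⟨0, hn⟩) ⟨0, hn⟩
    simp only [Matrix.zero_apply, Matrix.one_apply_eq] at h2
    exact zero_ne_one h2
  have hentry : ∃ i j, N i j ≠ 0 := by
    by_contra h
    push_neg at h
    exact hN0 (by ext i j; simpa using h i j)
  have htr : (star N * N).trace = ((∑ i, ∑ k, Complex.normSq (N k i) : ℝ) : ℂ) := by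
    simp only [Matrix.trace, Matrix.diag, Matrix.mul_apply, Matrix.star_apply]
    push_cast
    refine Finset.sum_congr rfl fun i _ => Finset.sum_congr rfl fun k _ => ?_
    simp [Complex.star_def, Complex.normSq_eq_conj_mul_self]
  have hpos : 0 < ∑ i, ∑ k, Complex.normSq (N k i) := by
    obtain ⟨r, c, hrc⟩ := hentry
    refine Finset.sum_pos'
      (fun i _ => Finset.sum_nonneg fun k _ => Complex.normSq_nonneg _)
      ⟨c, Finset.mem_univ c, ?_⟩
    exact Finset.sum_pos' (fun k _ => Complex.normSq_nonneg _)
      ⟨r, Finset.mem_univ r, Complex.normSq_pos.mpr hrc⟩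
  constructor
  · rw [hsplit, htr]
    simp
  · rw [hsplit, htr]
    simpa using hpos

end stmt17aux

/-- `t ↦ Φ_ρ(A + tB)` is differentiable at `t = 0` with derivative
`Tr(τ_A B)`. -/
theorem stmt17 (n : ℕ) (hn : 1 ≤ n) (ρ : Matrix (Fin n) (Fin n) ℂ)
    (hρ : ρ.PosDef) (hρ1 : ρ.trace = 1)
    (A B : Matrix (Fin n) (Fin n) ℂ) (hA : A.IsHermitian) (hB : B.IsHermitian) :
    HasDerivAt (fun t : ℝ => potential ρ (A + t • B))
      ((Matrix.trace (tauOf ρ A * B)).re) 0 := by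
  classical
  have hlog : (mlog ρ).IsHermitian := cfc_predicate Real.log ρ
  have hH : (mlog ρ + A).IsHermitian := hlog.add hA
  obtain ⟨hreal, hpos⟩ := aux_trace_exp_real_pos hn hH
  have h1 := aux_hasDerivAt_trace_exp (mlog ρ + A) B
  have h2 : HasDerivAt (fun t : ℝ => ((mexp ((mlog ρ + A) + t • B)).trace).re)
      (((mexp (mlog ρ + A) * B).trace).re) 0 :=
    Complex.reCLM.hasFDerivAt.comp_hasDerivAt 0 h1
  have h0ne : (fun t : ℝ => ((mexp ((mlog ρ + A) + t • B)).trace).re) 0 ≠ 0 := by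
    simpa using hpos.ne'
  have h3 := h2.log h0ne
  have hfe : (fun t : ℝ => potential ρ (A + t • B))
      = fun t : ℝ => Real.log (((mexp ((mlog ρ + A) + t • B)).trace).re) := by
    funext t
    simp only [potential, add_assoc]
  rw [hfe]
  convert h3 using 1
  have e0 : (mlog ρ + A) + (0 : ℝ) • B = mlog ρ + A := by simp
  simp only [e0]
  simp only [tauOf, smul_mul_assoc, Matrix.trace_smul, smul_eq_mul]
  rw [hreal, ← Complex.ofReal_inv]
  rw [Complex.ofReal_re, Complex.re_ofReal_mul, inv_mul_eq_div]
end

section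
/- Let ρ be a non-degenerate density matrix and A, B Hermitian n×n matrices, and define τ_A = exp(log ρ + A) / Tr exp(log ρ + A). Then the matrix-valued map t ↦ τ_{A + tB} is differentiable at t = 0 with derivative equal to [ B − (Tr τ_A B)·I ]^K_{τ_A} = ∫₀¹ τ_A^u ( B − (Tr τ_A B)·I ) τ_A^{1−u} du. -/
open MeasureTheory
open scoped ComplexOrder

attribute [local instance] Matrix.frobeniusNormedAddCommGroup Matrix.frobeniusNormedSpace

variable {n : ℕ}

attribute [local instance] Matrix.frobeniusNormedRing Matrix.frobeniusNormedAlgebra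

/-- The Frobenius normed ring structure, with the ring and uniform structure of `Matrix`. -/
noncomputable abbrev auxNormedRing : NormedRing (Matrix (Fin n) (Fin n) ℂ) :=
  { (Matrix.frobeniusNormedRing : NormedRing (Matrix (Fin n) (Fin n) ℂ)).toNorm,
    (Matrix.instRing : Ring (Matrix (Fin n) (Fin n) ℂ)),
    (@MetricSpace.replaceUniformity _ (Matrix.instUniformSpace _ _ _)
      (Matrix.frobeniusNormedRing : NormedRing (Matrix (Fin n) (Fin n) ℂ)).toMetricSpace rfl) with
    dist_eq := (Matrix.frobeniusNormedRing : NormedRing (Matrix (Fin n) (Fin n) ℂ)).dist_eq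
    norm_mul_le := (Matrix.frobeniusNormedRing : NormedRing (Matrix (Fin n) (Fin n) ℂ)).norm_mul_le }

attribute [local instance] auxNormedRing

/-- The Frobenius normed `𝕜`-algebra structure, with the algebra structure of `Matrix`. -/
noncomputable abbrev auxNormedAlgebra (𝕜 : Type) [NormedField 𝕜] [NormedAlgebra 𝕜 ℂ] :
    NormedAlgebra 𝕜 (Matrix (Fin n) (Fin n) ℂ) :=
  { (Matrix.instAlgebra : Algebra 𝕜 (Matrix (Fin n) (Fin n) ℂ)) with
    norm_smul_le := (Matrix.frobeniusNormedAlgebra :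
      NormedAlgebra 𝕜 (Matrix (Fin n) (Fin n) ℂ)).norm_smul_le }

attribute [local instance] auxNormedAlgebra

/-- The normed group underlying `auxNormedRing`. -/
noncomputable abbrev auxNormedAddCommGroup : NormedAddCommGroup (Matrix (Fin n) (Fin n) ℂ) :=
  @NonUnitalNormedRing.toNormedAddCommGroup _ (@NormedRing.toNonUnitalNormedRing _ auxNormedRing)

attribute [local instance] auxNormedAddCommGroup

/-- The normed space underlying `auxNormedAlgebra`. -/
noncomputable abbrev auxNormedSpace (𝕜 : Type) [NormedField 𝕜] [NormedAlgebra 𝕜 ℂ] :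
    NormedSpace 𝕜 (Matrix (Fin n) (Fin n) ℂ) :=
  (auxNormedAlgebra 𝕜).toNormedSpace

attribute [local instance] auxNormedSpace

open NormedSpace

section auxlemmas

local notation "MM" => Matrix (Fin n) (Fin n) ℂ

lemma aux_expc (Z : MM) : Continuous fun s : ℝ => exp (s • Z) :=
  exp_continuous.comp (continuous_id.smul continuous_const)

lemma aux_hasDerivAt_G (Z X : MM) (s : ℝ) :
    HasDerivAt (fun s : ℝ => exp (s • Z) * exp ((1 - s) • X))
      (exp (s • Z) * (Z - X) * exp ((1 - s) • X)) s := by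
  have h1 : HasDerivAt (fun s : ℝ => exp (s • Z)) (exp (s • Z) * Z) s :=
    hasDerivAt_exp_smul_const (𝕂 := ℝ) Z s
  have h0 : HasDerivAt (fun s : ℝ => 1 - s) (-1) s := by
    simpa using (hasDerivAt_id s).const_sub 1
  have h2 : HasDerivAt (fun s : ℝ => exp ((1 - s) • X))
      ((-1 : ℝ) • (X * exp ((1 - s) • X))) s :=
    (hasDerivAt_exp_smul_const' (𝕂 := ℝ) X (1 - s)).scomp s h0
  have := h1.mul h2
  refine this.congr_deriv (Eq.symm ?_)
  simp only [neg_one_smul, mul_neg, mul_sub, sub_mul, mul_assoc]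
  rw [← (Commute.refl X).smul_left (1 - s) |>.exp_left |>.eq]
  abel

lemma aux_duhamel (X Y : MM) (t : ℝ) :
    exp (X + t • Y) - exp X
      = ∫ s in (0:ℝ)..1, exp (s • (X + t • Y)) * (t • Y) * exp ((1 - s) • X) := by
  have key : ∀ s ∈ Set.uIcc (0:ℝ) 1,
      HasDerivAt (fun s : ℝ => exp (s • (X + t • Y)) * exp ((1 - s) • X))
        (exp (s • (X + t • Y)) * (t • Y) * exp ((1 - s) • X)) s := by
    intro s _
    simpa [add_sub_cancel_left] using aux_hasDerivAt_G (X + t • Y) X s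
  have hcont : Continuous fun s : ℝ =>
      exp (s • (X + t • Y)) * (t • Y) * exp ((1 - s) • X) := by
    exact ((aux_expc _).mul continuous_const).mul
      (exp_continuous.comp ((continuous_const.sub continuous_id).smul continuous_const))
  have := intervalIntegral.integral_eq_sub_of_hasDerivAt key
    (hcont.intervalIntegrable 0 1)
  rw [this]
  simp [exp_zero]

lemma aux_hasDerivAt_exp_param (X Y : MM) :
    HasDerivAt (fun t : ℝ => exp (X + t • Y))
      (∫ s in (0:ℝ)..1, exp (s • X) * Y * exp ((1 - s) • X)) 0 := by
  have hIcont : Continuous fun t : ℝ =>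
      ∫ s in (0:ℝ)..1, exp (s • (X + t • Y)) * Y * exp ((1 - s) • X) := by
    apply intervalIntegral.continuous_parametric_intervalIntegral_of_continuous'
    have : Continuous fun p : ℝ × ℝ =>
        exp (p.2 • (X + p.1 • Y)) * Y * exp ((1 - p.2) • X) := by
      refine ((exp_continuous.comp ?_).mul continuous_const).mul
        (exp_continuous.comp ((continuous_const.sub continuous_snd).smul continuous_const))
      exact continuous_snd.smul (continuous_const.add (continuous_fst.smul continuous_const))
    exact this
  rw [hasDerivAt_iff_tendsto_slope]
  have heq : ∀ t : ℝ, t ≠ 0 → slope (fun t : ℝ => exp (X + t • Y)) 0 t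
      = ∫ s in (0:ℝ)..1, exp (s • (X + t • Y)) * Y * exp ((1 - s) • X) := by
    intro t ht
    rw [slope_def_module]
    rw [zero_smul, add_zero, sub_zero, aux_duhamel X Y t]
    have : ∀ s : ℝ, exp (s • (X + t • Y)) * (t • Y) * exp ((1 - s) • X)
        = t • (exp (s • (X + t • Y)) * Y * exp ((1 - s) • X)) := by
      intro s; simp [mul_smul_comm, smul_mul_assoc]
    simp_rw [this, intervalIntegral.integral_smul, inv_smul_smul₀ ht]
  have hlim := (hIcont.tendsto 0).mono_left (nhdsWithin_le_nhds (s := {(0:ℝ)}ᶜ))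
  simp only [zero_smul, add_zero] at hlim
  refine hlim.congr' ?_
  filter_upwards [self_mem_nhdsWithin] with t ht
  exact (heq t ht).symm

lemma aux_mpow_exp (H : MM) (hH : IsSelfAdjoint H) (u : ℝ) :
    mpow (exp H) u = exp (u • H) := by
  have huH : IsSelfAdjoint (u • H) := IsSelfAdjoint.smul (star_trivial u) hH
  have hspec : ∀ x ∈ Real.exp '' spectrum ℝ H, (0:ℝ) < x := by
    rintro x ⟨y, -, rfl⟩; exact Real.exp_pos y
  have hcont : ContinuousOn (fun x : ℝ => x ^ u) (Real.exp '' spectrum ℝ H) := by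
    intro x hx
    exact (Real.continuousAt_rpow_const x u (Or.inl (hspec x hx).ne')).continuousWithinAt
  rw [mpow, ← CFC.real_exp_eq_normedSpace_exp hH,
    ← cfc_comp' (fun x : ℝ => x ^ u) Real.exp H hcont]
  have h1 : cfc (fun x : ℝ => Real.exp x ^ u) H = cfc (fun x : ℝ => Real.exp (u * x)) H := by
    apply cfc_congr
    intro x _
    show Real.exp x ^ u = Real.exp (u * x)
    rw [Real.rpow_def_of_pos (Real.exp_pos x), Real.log_exp, mul_comm]
  rw [h1, cfc_comp' Real.exp (fun x : ℝ => u * x) H (by fun_prop) (by fun_prop)]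
  have h3 : cfc (fun x : ℝ => u * x) H = u • H := by
    have := cfc_smul_id (R := ℝ) u H
    simpa [smul_eq_mul] using this
  rw [h3, CFC.real_exp_eq_normedSpace_exp huH]

lemma aux_trace_exp_eq (H : MM) (hH : H.IsHermitian) :
    Matrix.trace (exp H) = ((∑ i, Real.exp (hH.eigenvalues i) : ℝ) : ℂ) := by
  rw [← CFC.real_exp_eq_normedSpace_exp hH.isSelfAdjoint, hH.cfc_eq, Matrix.IsHermitian.cfc,
    Unitary.conjStarAlgAut_apply, Matrix.trace_mul_cycle, Unitary.coe_star_mul_self, one_mul, Matrix.trace_diagonal]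
  push_cast
  simp [Function.comp, Complex.ofReal_exp]

lemma aux_trace_exp_pos (hn : 0 < n) (H : MM) (hH : H.IsHermitian) :
    0 < (Matrix.trace (exp H)).re ∧
      Matrix.trace (exp H) = ((Matrix.trace (exp H)).re : ℂ) := by
  rw [aux_trace_exp_eq H hH]
  haveI : Nonempty (Fin n) := ⟨⟨0, hn⟩⟩
  constructor
  · rw [Complex.ofReal_re]
    exact Finset.sum_pos (fun i _ => Real.exp_pos _) Finset.univ_nonempty
  · simp

lemma aux_exp_add_smul_one (K : MM) (c : ℝ) :
    exp (K + c • (1 : MM)) = Real.exp c • exp K := by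
  rw [NormedSpace.exp_add_of_commute ((Commute.one_right K).smul_right c)]
  have h1 : c • (1 : MM) = algebraMap ℝ MM c := (Algebra.algebraMap_eq_smul_one c).symm
  rw [h1, ← map_exp (algebraMap ℝ MM) (continuous_algebraMap ℝ MM),
    ← Real.exp_eq_exp_ℝ, Algebra.algebraMap_eq_smul_one, mul_smul_comm, mul_one]

end auxlemmas

/-- `t ↦ τ_{A + tB}` is differentiable at `t = 0` with derivative
`[B - (Tr τ_A B)·I]^K_{τ_A}`. -/
theorem stmt18 (n : ℕ) (hn : 1 ≤ n) (ρ : Matrix (Fin n) (Fin n) ℂ)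
    (hρ : ρ.PosDef) (hρ1 : ρ.trace = 1)
    (A B : Matrix (Fin n) (Fin n) ℂ) (hA : A.IsHermitian) (hB : B.IsHermitian) :
    HasDerivAt (fun t : ℝ => tauOf ρ (A + t • B))
      (kubo (tauOf ρ A)
        (B - (Matrix.trace (tauOf ρ A * B)).re • (1 : Matrix (Fin n) (Fin n) ℂ))) 0 := by
  have hexp : (NormedSpace.exp : Matrix (Fin n) (Fin n) ℂ → Matrix (Fin n) (Fin n) ℂ)
      = NormedSpace.exp := rfl
  set L : Matrix (Fin n) (Fin n) ℂ := mlog ρ + A with hLdef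
  have hLsa : IsSelfAdjoint L := (cfc_predicate Real.log ρ).add hA.isSelfAdjoint
  have hLh : L.IsHermitian := by
    rw [Matrix.IsHermitian, ← Matrix.star_eq_conjTranspose]; exact hLsa.star_eq
  obtain ⟨hzpos, hzre⟩ := aux_trace_exp_pos (by omega) L hLh
  set z : ℂ := Matrix.trace (exp L) with hzdef
  set zR : ℝ := z.re with hzRdef
  have hzR0 : zR ≠ 0 := ne_of_gt hzpos
  have hz0 : z ≠ 0 := by rw [hzre]; exact_mod_cast hzR0
  set c₀ : ℝ := Real.log zR with hc0def
  have hexpc : Real.exp (-c₀) = zR⁻¹ := by rw [Real.exp_neg, Real.exp_log hzpos]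
  have htau : tauOf ρ A = exp (L + (-c₀) • 1) := by
    rw [aux_exp_add_smul_one, hexpc, tauOf, mexp, ← hLdef, congrFun hexp L, ← hzdef, hzre,
      ← Complex.ofReal_inv, Complex.coe_smul]
  have hHsa : IsSelfAdjoint (L + (-c₀) • (1 : Matrix (Fin n) (Fin n) ℂ)) :=
    hLsa.add (IsSelfAdjoint.smul (star_trivial _) (IsSelfAdjoint.one _))
  have hmpow : ∀ u : ℝ, mpow (tauOf ρ A) u = Real.exp (u * -c₀) • exp (u • L) := by
    intro u
    rw [htau, aux_mpow_exp _ hHsa u, smul_add, smul_smul, aux_exp_add_smul_one]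
  set D : Matrix (Fin n) (Fin n) ℂ :=
    ∫ s in (0:ℝ)..1, exp (s • L) * B * exp ((1 - s) • L) with hDdef
  have hf : HasDerivAt (fun t : ℝ => exp (L + t • B)) D 0 := aux_hasDerivAt_exp_param L B
  set T : Matrix (Fin n) (Fin n) ℂ →L[ℝ] ℂ :=
    LinearMap.toContinuousLinearMap (Matrix.traceLinearMap (Fin n) ℝ ℂ) with hTdef
  have hT : ∀ X : Matrix (Fin n) (Fin n) ℂ, T X = Matrix.trace X := fun X => rfl
  have hF0 : exp (L + (0:ℝ) • B) = exp L := by rw [zero_smul, add_zero]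
  have htr : HasDerivAt (fun t : ℝ => Matrix.trace (exp (L + t • B))) (Matrix.trace D) 0 := by
    have := (T.hasFDerivAt (x := exp (L + (0:ℝ) • B))).comp_hasDerivAt 0 hf
    simpa [hT, Function.comp_def] using this
  have hinv : HasDerivAt (fun t : ℝ => (Matrix.trace (exp (L + t • B)))⁻¹)
      (-(Matrix.trace D) / z ^ 2) 0 := by
    have h0 : z = Matrix.trace (exp (L + (0:ℝ) • B)) := by rw [hF0, hzdef]
    have hder := ((hasDerivAt_inv hz0).hasFDerivAt.restrictScalars ℝ).comp_hasDerivAt_of_eq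
      0 htr h0
    refine hder.congr_deriv (Eq.symm ?_)
    simp only [ContinuousLinearMap.coe_restrictScalars', ContinuousLinearMap.smulRight_apply,
      ContinuousLinearMap.one_apply, smul_eq_mul, ContinuousLinearMap.toSpanSingleton_apply]
    ring
  have hg := hinv.smul hf
  rw [hF0, ← hzdef] at hg
  have hfun : (fun t : ℝ => tauOf ρ (A + t • B))
      = fun t : ℝ => (Matrix.trace (exp (L + t • B)))⁻¹ • exp (L + t • B) := by
    funext t
    rw [tauOf, mexp, ← add_assoc, ← hLdef, congrFun hexp]
  rw [hfun]
  refine hg.congr_deriv (Eq.symm ?_)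
  -- now prove the value equality
  have hcont1 : Continuous fun s : ℝ => exp (s • L) * B * exp ((1 - s) • L) :=
    ((aux_expc L).mul continuous_const).mul
      (exp_continuous.comp ((continuous_const.sub continuous_id).smul continuous_const))
  have hPQ : ∀ u : ℝ, exp (u • L) * exp ((1 - u) • L) = exp L := fun u => by
    rw [← NormedSpace.exp_add_of_commute (((Commute.refl L).smul_left u).smul_right (1 - u)),
      ← add_smul]
    norm_num
  have htrD : Matrix.trace D = Matrix.trace (exp L * B) := by
    rw [← hT D, hDdef, ← T.intervalIntegral_comp_comm (hcont1.intervalIntegrable 0 1)]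
    have hptw : Set.EqOn (fun s : ℝ => T (exp (s • L) * B * exp ((1 - s) • L)))
        (fun _ : ℝ => Matrix.trace (exp L * B)) (Set.uIcc 0 1) := by
      intro s _
      show T (exp (s • L) * B * exp ((1 - s) • L)) = Matrix.trace (exp L * B)
      have h2 : exp ((1 - s) • L) * exp (s • L) = exp L := by
        rw [← NormedSpace.exp_add_of_commute (((Commute.refl L).smul_left (1 - s)).smul_right s),
          ← add_smul]
        norm_num
      rw [hT, Matrix.trace_mul_cycle, h2]
    rw [intervalIntegral.integral_congr hptw]
    simp
  have hexpLh : (exp L).IsHermitian := by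
    rw [Matrix.IsHermitian, ← Matrix.star_eq_conjTranspose, NormedSpace.star_exp, hLsa.star_eq]
  have hw : Matrix.trace (exp L * B) = (((Matrix.trace (exp L * B)).re : ℝ) : ℂ) := by
    have hstar : (starRingEnd ℂ) (Matrix.trace (exp L * B)) = Matrix.trace (exp L * B) := by
      rw [show (starRingEnd ℂ) (Matrix.trace (exp L * B))
            = star (Matrix.trace (exp L * B)) from rfl,
        ← Matrix.trace_conjTranspose, Matrix.conjTranspose_mul, hB.eq, hexpLh.eq,
        Matrix.trace_mul_comm]
    exact (Complex.conj_eq_iff_re.mp hstar).symm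
  set w : ℝ := (Matrix.trace (exp L * B)).re with hwdef
  have htau' : tauOf ρ A = zR⁻¹ • exp L := by rw [htau, aux_exp_add_smul_one, hexpc]
  have hr : (Matrix.trace (tauOf ρ A * B)).re = zR⁻¹ * w := by
    rw [htau', Matrix.smul_mul, Matrix.trace_smul, hwdef]
    simp [Complex.smul_re]
  have hkubo : kubo (tauOf ρ A) (B - (zR⁻¹ * w) • 1)
      = zR⁻¹ • D - (zR⁻¹ * (zR⁻¹ * w)) • exp L := by
    show ∫ u in (0:ℝ)..1, mpow (tauOf ρ A) u * (B - (zR⁻¹ * w) • 1) * mpow (tauOf ρ A) (1 - u) = _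
    have hint : ∀ u : ℝ,
        mpow (tauOf ρ A) u * (B - (zR⁻¹ * w) • 1) * mpow (tauOf ρ A) (1 - u)
          = zR⁻¹ • (exp (u • L) * B * exp ((1 - u) • L))
            - (zR⁻¹ * (zR⁻¹ * w)) • exp L := by
      intro u
      rw [hmpow u, hmpow (1 - u)]
      have hab : Real.exp (u * -c₀) * Real.exp ((1 - u) * -c₀) = zR⁻¹ := by
        rw [← Real.exp_add, ← hexpc]; ring_nf
      rw [smul_mul_assoc, smul_mul_assoc, mul_smul_comm, smul_smul, hab]
      rw [mul_sub, sub_mul, mul_smul_comm, mul_one, smul_mul_assoc, hPQ u, smul_sub, smul_smul]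
    simp_rw [hint]
    rw [intervalIntegral.integral_sub
      (f := fun u : ℝ => zR⁻¹ • (exp (u • L) * B * exp ((1 - u) • L)))
      ((hcont1.const_smul zR⁻¹).intervalIntegrable 0 1) intervalIntegrable_const,
      intervalIntegral.integral_smul, ← hDdef, intervalIntegral.integral_const]
    norm_num
  rw [hr, hkubo, htrD, hw, hzre]
  have e1 : ((zR : ℝ) : ℂ)⁻¹ • D = zR⁻¹ • D := by
    rw [← Complex.ofReal_inv, Complex.coe_smul]
  have hreal : -(w / zR ^ 2) = -(zR⁻¹ * (zR⁻¹ * w)) := by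
    field_simp
  have e2 : (-((w : ℝ) : ℂ) / ((zR : ℝ) : ℂ) ^ 2) • exp L
      = (-(zR⁻¹ * (zR⁻¹ * w))) • exp L := by
    rw [show (-((w : ℝ) : ℂ) / ((zR : ℝ) : ℂ) ^ 2) = ((-(w / zR ^ 2) : ℝ) : ℂ) by push_cast; ring,
      hreal, Complex.coe_smul]
  rw [e1, e2, neg_smul, ← sub_eq_add_neg]
end
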